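/- arXiv:1312.7382 — 3 statements merged into one kernel-verified Lean document; each statement's English description precedes it below -/
import Mathlib

section
/- For real numbers a, b with 0 < a < b < 1, the improper integral ∫_b^1 dx / (x(x-a)√((x-b)(1-x))) equals (π/(a(1-a))) · ((a-1)/√b + 1/c), where c = √((b-a)/(1-a)). -/
open Real MeasureTheory Set Filter Topology

lemma aux_int (p q : ℝ) (hp : 0 < p) (hq : 0 < q) :
    IntegrableOn (fun t => 1/(p*t^2+q)) (Set.Ioi 0) ∧
    ∫ t in Set.Ioi 0, 1/(p*t^2+q) = π/(2*Real.sqrt (p*q)) := by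
  set s := Real.sqrt (p/q) with hs
  have hs0 : 0 < s := Real.sqrt_pos.mpr (by positivity)
  have hs2 : s^2 = p/q := Real.sq_sqrt (by positivity)
  have hsq : s * q = Real.sqrt (p*q) := by
    rw [hs, show q = Real.sqrt (q^2) by rw [Real.sqrt_sq hq.le], ← Real.sqrt_mul (by positivity)]
    rw [Real.sqrt_sq hq.le]
    congr 1
    field_simp
  set F := fun t => (1/(s*q)) * Real.arctan (s*t) with hF
  have hderiv : ∀ t ∈ Ici (0:ℝ), HasDerivAt F (1/(p*t^2+q)) t := by
    intro t _
    have h1 : HasDerivAt (fun t => Real.arctan (s*t)) (s * (1/(1+(s*t)^2))) t := by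
      have := (Real.hasDerivAt_arctan (s*t)).comp t ((hasDerivAt_id t).const_mul s)
      simpa [Function.comp_def, mul_comm] using this
    have h2 := h1.const_mul (1/(s*q))
    refine h2.congr_deriv ?_
    have : (s*t)^2 = (p/q)*t^2 := by rw [mul_pow, hs2]
    rw [this]
    field_simp; ring
  have hlim : Tendsto F atTop (𝓝 (π/(2*Real.sqrt (p*q)))) := by
    have h1 : Tendsto (fun t => s*t) atTop atTop :=
      Tendsto.const_mul_atTop hs0 tendsto_id
    have h2 := (Real.tendsto_arctan_atTop.mono_right nhdsWithin_le_nhds).comp h1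
    have h3 := h2.const_mul (1/(s*q))
    have : (1/(s*q)) * (π/2) = π/(2*Real.sqrt (p*q)) := by rw [← hsq]; ring
    rw [← this]
    exact h3
  have pos : ∀ t ∈ Ioi (0:ℝ), 0 ≤ 1/(p*t^2+q) := fun t _ => by positivity
  have key := integral_Ioi_of_hasDerivAt_of_nonneg' hderiv pos hlim
  have hint := integrableOn_Ioi_deriv_of_nonneg' hderiv pos hlim
  constructor
  · exact hint
  · rw [key, hF]; simp

theorem stmt_0 (a b : ℝ) (ha : 0 < a) (hab : a < b) (hb : b < 1)
    (c : ℝ) (hc : c = Real.sqrt ((b - a) / (1 - a))) :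
    ∫ x in Set.Ioo b 1, 1 / (x * (x - a) * Real.sqrt ((x - b) * (1 - x))) =
      Real.pi / (a * (1 - a)) * ((a - 1) / Real.sqrt b + 1 / c) := by
  have hb0 : 0 < b := ha.trans hab
  have h1b : 0 < 1 - b := by linarith
  have h1a : 0 < 1 - a := by linarith
  have hba : 0 < b - a := by linarith
  set f : ℝ → ℝ := fun t => b + (1-b)/(t^2+1) with hf
  set f' : ℝ → ℝ := fun t => -((1-b)*(2*t)/(t^2+1)^2) with hf'
  set g : ℝ → ℝ := fun x => 1 / (x * (x - a) * Real.sqrt ((x - b) * (1 - x))) with hg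
  have himg : Set.Ioo b 1 = f '' Set.Ioi 0 := by
    ext x
    constructor
    · rintro ⟨hx1, hx2⟩
      have hxb : 0 < x - b := by linarith
      have hx1' : 0 < 1 - x := by linarith
      refine ⟨Real.sqrt ((1-x)/(x-b)), Real.sqrt_pos.mpr (by positivity), ?_⟩
      have ht2 : Real.sqrt ((1-x)/(x-b))^2 = (1-x)/(x-b) := Real.sq_sqrt (by positivity)
      simp only [hf, ht2]
      field_simp
      ring
    · rintro ⟨t, ht, rfl⟩
      have ht0 : (0:ℝ) < t := ht
      have hu : (0:ℝ) < t^2+1 := by positivity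
      constructor
      · simp only [hf]; nlinarith [div_pos h1b hu]
      · simp only [hf]
        have : (1-b)/(t^2+1) < 1-b := by
          rw [div_lt_iff₀ hu]; nlinarith [mul_pos h1b (pow_pos ht0 2)]
        linarith
  have hderiv : ∀ t ∈ Set.Ioi (0:ℝ), HasDerivWithinAt f (f' t) (Set.Ioi 0) t := by
    intro t ht
    have hu : (t:ℝ)^2+1 ≠ 0 := by positivity
    have : HasDerivAt f (-((1-b)*(2*t)/(t^2+1)^2)) t := by
      have h1 : HasDerivAt (fun t : ℝ => t^2+1) (2*t) t := by
        simpa using ((hasDerivAt_pow 2 t).add_const 1)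
      have h3 : HasDerivAt (fun t : ℝ => (1-b)/(t^2+1)) (-((1-b)*(2*t)/(t^2+1)^2)) t := by
        have := (hasDerivAt_const t (1-b)).div h1 hu
        refine this.congr_deriv ?_
        ring
      simpa [hf] using h3.const_add b
    exact this.hasDerivWithinAt
  have hinj : Set.InjOn f (Set.Ioi 0) := by
    intro t1 h1 t2 h2 heq
    simp only [hf] at heq
    have hu1 : (t1:ℝ)^2+1 ≠ 0 := by positivity
    have hu2 : (t2:ℝ)^2+1 ≠ 0 := by positivity
    have : (1-b)*(t2^2+1) = (1-b)*(t1^2+1) := by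
      field_simp at heq
      linarith [heq]
    have ht : t1^2 = t2^2 := by nlinarith
    nlinarith [Set.mem_Ioi.mp h1, Set.mem_Ioi.mp h2]
  have hsub := MeasureTheory.integral_image_eq_integral_abs_deriv_smul
    measurableSet_Ioi hderiv hinj g
  rw [himg, hsub]
  have hcongr : ∀ t ∈ Set.Ioi (0:ℝ), |f' t| • g (f t)
      = (-2/a) * (1/(b*t^2+1)) + (2/a) * (1/((b-a)*t^2+(1-a))) := by
    intro t ht
    have ht0 : (0:ℝ) < t := ht
    have hu : (0:ℝ) < t^2+1 := by positivity
    have hfx : f t = (b*t^2+1)/(t^2+1) := by simp only [hf]; field_simp; ring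
    have hfa : f t - a = ((b-a)*t^2+(1-a))/(t^2+1) := by simp only [hf]; field_simp; ring
    have hnum1 : (0:ℝ) < b*t^2+1 := by positivity
    have hnum2 : (0:ℝ) < (b-a)*t^2+(1-a) := by positivity
    have hsq : Real.sqrt ((f t - b) * (1 - f t)) = (1-b)*t/(t^2+1) := by
      have e1 : (f t - b) * (1 - f t) = ((1-b)*t/(t^2+1))^2 := by
        simp only [hf]; field_simp; ring
      rw [e1, Real.sqrt_sq (by positivity)]
    have habs : |f' t| = (1-b)*(2*t)/(t^2+1)^2 := by
      simp only [hf', abs_neg]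
      exact abs_of_nonneg (by positivity)
    rw [smul_eq_mul]
    simp only [hg]
    rw [hsq, habs, hfa, hfx]
    field_simp
    ring
  rw [MeasureTheory.setIntegral_congr_fun measurableSet_Ioi hcongr]
  have i1 := aux_int b 1 hb0 one_pos
  have i2 := aux_int (b-a) (1-a) hba h1a
  rw [MeasureTheory.integral_add ((i1.1.const_mul _)) ((i2.1.const_mul _)),
    MeasureTheory.integral_const_mul, MeasureTheory.integral_const_mul, i1.2, i2.2]
  have hsb : Real.sqrt (b*1) = Real.sqrt b := by rw [mul_one]
  have hsm : Real.sqrt ((b-a)*(1-a)) = Real.sqrt (b-a) * Real.sqrt (1-a) :=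
    Real.sqrt_mul hba.le _
  have hcc : c = Real.sqrt (b-a) / Real.sqrt (1-a) := by
    rw [hc, Real.sqrt_div hba.le]
  have sb := Real.sq_sqrt hb0.le
  have s1 := Real.sq_sqrt h1a.le
  have s2 := Real.sq_sqrt hba.le
  have sbpos := Real.sqrt_pos.mpr hb0
  have s1pos := Real.sqrt_pos.mpr h1a
  have s2pos := Real.sqrt_pos.mpr hba
  rw [hsb, hsm, hcc]
  rw [show a - 1 = -(Real.sqrt (1-a)^2) by rw [s1]; ring,
      show a * (1-a) = a * Real.sqrt (1-a)^2 by rw [s1]]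
  field_simp
end

section
/- For λ > 1 and m_λ(t) = cosh t / √(1 + λ sinh² t), the Gaussian curvature G(t) = -m_λ''(t)/m_λ(t) of the warped product metric dt² + m_λ(t)² dθ² equals (λ-1)·(3/h(t)² - 2/h(t)), where h(t) = 1 + λ sinh² t. -/
open Real

theorem stmt_5 (l : ℝ) (hl : 1 < l)
    (m h : ℝ → ℝ) (hm : ∀ t, m t = Real.cosh t / Real.sqrt (1 + l * Real.sinh t ^ 2))
    (hh : ∀ t, h t = 1 + l * Real.sinh t ^ 2) (t : ℝ) :
    -(deriv (deriv m) t) / m t = (l - 1) * (3 / h t ^ 2 - 2 / h t) := by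
  set u : ℝ → ℝ := fun x => 1 + l * Real.sinh x ^ 2 with hu_def
  have hl0 : (0:ℝ) < l := lt_trans one_pos hl
  have hu : ∀ x, 0 < u x := fun x => by positivity
  have hs : ∀ x, 0 < Real.sqrt (u x) := fun x => Real.sqrt_pos.mpr (hu x)
  have hsq : ∀ x, Real.sqrt (u x) ^ 2 = u x := fun x => Real.sq_sqrt (hu x).le
  -- derivative of u
  have hu' : ∀ x, HasDerivAt u (2 * l * Real.sinh x * Real.cosh x) x := by
    intro x
    have h1 : HasDerivAt (fun x => Real.sinh x ^ 2) (2 * Real.sinh x * Real.cosh x) x := by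
      have := (Real.hasDerivAt_sinh x).pow 2
      refine this.congr_deriv (Eq.symm ?_)
      norm_num
    have := (h1.const_mul l).const_add 1
    refine this.congr_deriv (Eq.symm ?_)
    ring
  -- derivative of sqrt ∘ u
  have hS : ∀ x, HasDerivAt (fun x => Real.sqrt (u x))
      (l * Real.sinh x * Real.cosh x / Real.sqrt (u x)) x := by
    intro x
    have := (Real.hasDerivAt_sqrt (ne_of_gt (hu x))).comp x (hu' x)
    refine this.congr_deriv (Eq.symm ?_)
    field_simp
  -- first derivative of m
  have hm1 : ∀ x, HasDerivAt m ((1 - l) * Real.sinh x / (Real.sqrt (u x) * u x)) x := by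
    intro x
    have hmm : m = fun x => Real.cosh x / Real.sqrt (u x) := funext fun x => hm x
    rw [hmm]
    have := (Real.hasDerivAt_cosh x).div (hS x) (ne_of_gt (hs x))
    refine this.congr_deriv (Eq.symm ?_)
    have hc : Real.cosh x ^ 2 = 1 + Real.sinh x ^ 2 := by
      rw [Real.cosh_sq']
    have hx : u x = 1 + l * Real.sinh x ^ 2 := rfl
    have hsx := hs x
    have hux := hu x
    have hqx := hsq x
    clear_value u
    field_simp
    linear_combination ((1 - l) * Real.sinh x - Real.sinh x * u x) * hqx + l * Real.sinh x * u x * hc - Real.sinh x * u x * hx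
  have hdm : deriv m = fun x => (1 - l) * Real.sinh x / (Real.sqrt (u x) * u x) :=
    funext fun x => (hm1 x).deriv
  -- second derivative
  have hD : HasDerivAt (fun x => Real.sqrt (u x) * u x)
      (3 * l * Real.sinh t * Real.cosh t * Real.sqrt (u t)) t := by
    have := (hS t).mul (hu' t)
    refine this.congr_deriv (Eq.symm ?_)
    have hst := hs t
    have hut := hu t
    have hqt := hsq t
    clear_value u
    field_simp
    linear_combination (Real.sinh t) * hqt
  have hm2 : HasDerivAt (deriv m)
      ((1 - l) * Real.cosh t * Real.sqrt (u t) * (u t - 3 * l * Real.sinh t ^ 2)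
        / (u t) ^ 3) t := by
    rw [hdm]
    have hN : HasDerivAt (fun x => (1 - l) * Real.sinh x) ((1 - l) * Real.cosh t) t :=
      (Real.hasDerivAt_sinh t).const_mul _
    have := hN.div hD (by positivity)
    refine this.congr_deriv (Eq.symm ?_)
    have h3 : (Real.sqrt (u t) * u t) ^ 2 = u t ^ 3 := by
      rw [mul_pow, hsq t]; ring
    rw [h3]
    field_simp
  rw [hm2.deriv, hm t, hh t]
  have hct : (0:ℝ) < Real.cosh t := Real.cosh_pos t
  have h1 : u t = 1 + l * Real.sinh t ^ 2 := rfl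
  rw [← h1]
  have hut := hu t
  have hst := hs t
  have hq := hsq t
  have hx : u t = 1 + l * Real.sinh t ^ 2 := rfl
  clear_value u
  field_simp
  linear_combination ((l - 1) * (u t - 3 * l * Real.sinh t ^ 2)) * hq
    + (3 * (l - 1) * u t) * hx
end

section
/- For λ > 1 and ν ∈ (1/√λ, 1), the half period function φ(ν) = ν√(λ-1) ∫_{ν²}^1 dx / (x(λx-1)√((x-ν²)(1-x))) equals π·(-√(λ-1) + λν/√(λν²-1)). -/
open Real MeasureTheory Set Filter Topology

lemma key_deriv (A B c : ℝ) (hcA : c < A) (hAB : A < B) {x : ℝ} (hx : x ∈ Set.Ioo A B) :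
    HasDerivAt (fun y => (2 / (Real.sqrt (A - c) * Real.sqrt (B - c))) *
        Real.arctan (Real.sqrt (B - c) * Real.sqrt (y - A) / (Real.sqrt (A - c) * Real.sqrt (B - y))))
      (1 / ((x - c) * Real.sqrt ((x - A) * (B - x)))) x := by
  obtain ⟨hxA, hxB⟩ := hx
  set α := Real.sqrt (A - c) with hαdef
  set β := Real.sqrt (B - c) with hβdef
  set p := Real.sqrt (x - A) with hpdef
  set q := Real.sqrt (B - x) with hqdef
  have hαpos : 0 < α := Real.sqrt_pos.2 (by linarith)
  have hβpos : 0 < β := Real.sqrt_pos.2 (by linarith)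
  have hppos : 0 < p := Real.sqrt_pos.2 (by linarith)
  have hqpos : 0 < q := Real.sqrt_pos.2 (by linarith)
  have hα2 : α ^ 2 = A - c := Real.sq_sqrt (by linarith)
  have hβ2 : β ^ 2 = B - c := Real.sq_sqrt (by linarith)
  have hp2 : p ^ 2 = x - A := Real.sq_sqrt (by linarith)
  have hq2 : q ^ 2 = B - x := Real.sq_sqrt (by linarith)
  have hp : HasDerivAt (fun y => Real.sqrt (y - A)) (1 / (2 * p)) x := by
    have h1 : HasDerivAt (fun y : ℝ => y - A) 1 x := (hasDerivAt_id x).sub_const A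
    have := (Real.hasDerivAt_sqrt (by linarith : x - A ≠ 0)).comp x h1
    simpa [Function.comp_def, hpdef] using this
  have hq : HasDerivAt (fun y => Real.sqrt (B - y)) (-(1 / (2 * q))) x := by
    have h1 : HasDerivAt (fun y : ℝ => B - y) (-1) x := by
      simpa [Pi.sub_def] using (hasDerivAt_const x B).sub (hasDerivAt_id x)
    have := (Real.hasDerivAt_sqrt (by intro h; nlinarith [hq2] : B - x ≠ 0)).comp x h1
    simpa [hqdef, Function.comp_def] using this
  have hnum : HasDerivAt (fun y => β * Real.sqrt (y - A)) (β * (1 / (2 * p))) x := hp.const_mul β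
  have hden : HasDerivAt (fun y => α * Real.sqrt (B - y)) (α * (-(1 / (2 * q)))) x := hq.const_mul α
  have hdenne : α * q ≠ 0 := by positivity
  have hu : HasDerivAt (fun y => β * Real.sqrt (y - A) / (α * Real.sqrt (B - y)))
      ((β * (1 / (2 * p)) * (α * q) - β * p * (α * (-(1 / (2 * q))))) / (α * q) ^ 2) x :=
    hnum.div hden hdenne
  have harctan := (Real.hasDerivAt_arctan (β * p / (α * q))).comp x hu
  have := harctan.const_mul (2 / (α * β))
  refine this.congr_deriv (Eq.symm ?_)
  have hsqrtmul : Real.sqrt ((x - A) * (B - x)) = p * q := Real.sqrt_mul (by linarith) _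
  rw [hsqrtmul]
  have hxc : x - c = p ^ 2 + α ^ 2 := by nlinarith [hp2, hα2]
  have hrel : β ^ 2 = p ^ 2 + q ^ 2 + α ^ 2 := by nlinarith [hβ2, hp2, hq2, hα2]
  rw [hxc]
  have h1 : (1 : ℝ) + (β * p / (α * q)) ^ 2 = (α ^ 2 * q ^ 2 + β ^ 2 * p ^ 2) / (α * q) ^ 2 := by
    field_simp
  rw [h1]
  field_simp
  linear_combination (p^2) * hrel

lemma key_int (A B c : ℝ) (hcA : c < A) (hAB : A < B) :
    IntegrableOn (fun x => 1 / ((x - c) * Real.sqrt ((x - A) * (B - x)))) (Set.Ioo A B) volume ∧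
    ∫ x in Set.Ioo A B, 1 / ((x - c) * Real.sqrt ((x - A) * (B - x))) =
      π / Real.sqrt ((A - c) * (B - c)) := by
  set f : ℝ → ℝ := fun x => 1 / ((x - c) * Real.sqrt ((x - A) * (B - x))) with hfdef
  set α := Real.sqrt (A - c) with hαdef
  set β := Real.sqrt (B - c) with hβdef
  have hαpos : 0 < α := Real.sqrt_pos.2 (by linarith)
  have hβpos : 0 < β := Real.sqrt_pos.2 (by linarith)
  set G : ℝ → ℝ := fun y => (2 / (α * β)) *
      Real.arctan (β * Real.sqrt (y - A) / (α * Real.sqrt (B - y))) with hGdef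
  set a : ℕ → ℝ := fun n => A + (B - A) / 2 * (1 / (n + 1)) with hadef
  set b : ℕ → ℝ := fun n => B - (B - A) / 2 * (1 / (n + 1)) with hbdef
  have hd : ∀ n : ℕ, 0 < (B - A) / 2 * (1 / ((n : ℝ) + 1)) := by
    intro n
    have h0 : (0:ℝ) < 1 / ((n:ℝ) + 1) := by positivity
    nlinarith
  have hd1 : ∀ n : ℕ, (B - A) / 2 * (1 / ((n : ℝ) + 1)) ≤ (B - A) / 2 := by
    intro n
    have h1 : (1 : ℝ) / ((n : ℝ) + 1) ≤ 1 := by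
      rw [div_le_one (by positivity)]; simp
    nlinarith
  have haA : ∀ n, A < a n := fun n => by have := hd n; simp only [hadef]; linarith
  have hbB : ∀ n, b n < B := fun n => by have := hd n; simp only [hbdef]; linarith
  have hab : ∀ n, a n ≤ b n := fun n => by have := hd1 n; simp only [hadef, hbdef]; linarith
  have hsub : ∀ n, Set.Icc (a n) (b n) ⊆ Set.Ioo A B := fun n =>
    Set.Icc_subset_Ioo (haA n) (hbB n)
  have hlim : Tendsto (fun n : ℕ => (1 : ℝ) / (n + 1)) atTop (𝓝 0) :=
    tendsto_one_div_add_atTop_nhds_zero_nat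
  have haT : Tendsto a atTop (𝓝 A) := by
    have := (hlim.const_mul ((B - A) / 2)).const_add A
    rw [hadef]; simpa using this
  have hbT : Tendsto b atTop (𝓝 B) := by
    have h := hlim.const_mul ((B - A) / 2)
    have := h.const_sub B
    rw [hbdef]; simpa using this
  have haT' : Tendsto a atTop (𝓝[>] A) :=
    tendsto_nhdsWithin_of_tendsto_nhds_of_eventually_within _ haT
      (Eventually.of_forall fun n => haA n)
  have hbT' : Tendsto b atTop (𝓝[<] B) :=
    tendsto_nhdsWithin_of_tendsto_nhds_of_eventually_within _ hbT
      (Eventually.of_forall fun n => hbB n)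
  -- continuity of f on Ioo A B
  have hcontf : ContinuousOn f (Set.Ioo A B) := by
    apply continuousOn_const.div
    · exact (continuousOn_id.sub continuousOn_const).mul
        (Real.continuous_sqrt.comp ((continuous_id.sub continuous_const).mul
          (continuous_const.sub continuous_id))).continuousOn
    · intro x hx
      have h1 : 0 < x - c := by have := hx.1; linarith
      have h2 : 0 < Real.sqrt ((x - A) * (B - x)) :=
        Real.sqrt_pos.2 (mul_pos (by linarith [hx.1]) (by linarith [hx.2]))
      exact (mul_pos h1 h2).ne'
  -- FTC on each Icc
  have hFTC : ∀ n, ∫ x in (a n)..(b n), f x = G (b n) - G (a n) := by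
    intro n
    apply intervalIntegral.integral_eq_sub_of_hasDerivAt
    · intro x hx
      rw [Set.uIcc_of_le (hab n)] at hx
      exact key_deriv A B c hcA hAB (hsub n hx)
    · apply ContinuousOn.intervalIntegrable
      rw [Set.uIcc_of_le (hab n)]
      exact hcontf.mono (hsub n)
  -- limit of G at A from the right is 0
  have hGA : Tendsto G (𝓝[>] A) (𝓝 0) := by
    have hc : ContinuousAt G A := by
      apply ContinuousAt.mul continuousAt_const
      apply Real.continuous_arctan.continuousAt.comp
      apply ContinuousAt.div
      · exact (continuous_const.mul (Real.continuous_sqrt.comp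
          (continuous_id.sub continuous_const))).continuousAt
      · exact (continuous_const.mul (Real.continuous_sqrt.comp
          (continuous_const.sub continuous_id))).continuousAt
      · have h0 : 0 < Real.sqrt (B - A) := Real.sqrt_pos.2 (by linarith)
        exact (mul_pos hαpos h0).ne'
    have hGA0 : G A = 0 := by
      simp [hGdef, sub_self, Real.sqrt_zero]
    have h := hc.tendsto.mono_left (nhdsWithin_le_nhds (s := Set.Ioi A))
    rwa [hGA0] at h
  -- limit of G at B from the left is π / (α * β)
  have hGB : Tendsto G (𝓝[<] B) (𝓝 (π / (α * β))) := by
    have h1 : Tendsto (fun y => β * Real.sqrt (y - A)) (𝓝[<] B) (𝓝 (β * Real.sqrt (B - A))) :=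
      ((continuous_const.mul (Real.continuous_sqrt.comp
        (continuous_id.sub continuous_const))).continuousAt).tendsto.mono_left nhdsWithin_le_nhds
    have h2 : Tendsto (fun y => α * Real.sqrt (B - y)) (𝓝[<] B) (𝓝[>] 0) := by
      rw [tendsto_nhdsWithin_iff]
      constructor
      · have hcont : Continuous (fun y : ℝ => α * Real.sqrt (B - y)) :=
          continuous_const.mul (Real.continuous_sqrt.comp (continuous_const.sub continuous_id))
        have h := (hcont.continuousAt (x := B)).tendsto.mono_left
          (nhdsWithin_le_nhds (s := Set.Iio B))
        simpa [sub_self, Real.sqrt_zero] using h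
      · filter_upwards [self_mem_nhdsWithin] with y hy
        have h0 : 0 < Real.sqrt (B - y) := Real.sqrt_pos.2 (sub_pos.2 (Set.mem_Iio.1 hy))
        exact Set.mem_Ioi.2 (mul_pos hαpos h0)
    have h3 : Tendsto (fun y => (α * Real.sqrt (B - y))⁻¹) (𝓝[<] B) atTop :=
      h2.inv_tendsto_nhdsGT_zero
    have hnum_pos : 0 < β * Real.sqrt (B - A) :=
      mul_pos hβpos (Real.sqrt_pos.2 (by linarith))
    have h4 : Tendsto (fun y => β * Real.sqrt (y - A) / (α * Real.sqrt (B - y)))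
        (𝓝[<] B) atTop := by
      simpa [div_eq_mul_inv] using Filter.Tendsto.pos_mul_atTop hnum_pos h1 h3
    have h5 : Tendsto (fun y => Real.arctan (β * Real.sqrt (y - A) / (α * Real.sqrt (B - y))))
        (𝓝[<] B) (𝓝 (π / 2)) :=
      (Real.tendsto_arctan_atTop.mono_right nhdsWithin_le_nhds).comp h4
    have h6 := Filter.Tendsto.const_mul (2 / (α * β)) h5
    have heq : (2 / (α * β)) * (π / 2) = π / (α * β) := by
      field_simp
    rwa [heq] at h6
  -- the sequence of integrals converges
  have hIlim : Tendsto (fun n => ∫ x in Set.Icc (a n) (b n), f x) atTop (𝓝 (π / (α * β))) := by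
    have heq : ∀ n, ∫ x in Set.Icc (a n) (b n), f x = G (b n) - G (a n) := by
      intro n
      rw [MeasureTheory.integral_Icc_eq_integral_Ioc,
        ← intervalIntegral.integral_of_le (hab n), hFTC n]
    simp only [heq]
    have := (hGB.comp hbT').sub (hGA.comp haT')
    simpa using this
  have hnonneg : 0 ≤ᵐ[volume.restrict (Set.Ioo A B)] f := by
    filter_upwards [ae_restrict_mem measurableSet_Ioo] with x hx
    have h1 : 0 ≤ x - c := by have := hx.1; linarith
    have h2 : 0 ≤ Real.sqrt ((x - A) * (B - x)) := Real.sqrt_nonneg _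
    exact div_nonneg zero_le_one (mul_nonneg h1 h2)
  have hcover : AECover (volume.restrict (Set.Ioo A B)) atTop (fun n => Set.Icc (a n) (b n)) :=
    MeasureTheory.aecover_Ioo_of_Icc haT hbT
  have hfi : ∀ n, IntegrableOn f (Set.Icc (a n) (b n)) (volume.restrict (Set.Ioo A B)) := by
    intro n
    rw [IntegrableOn, Measure.restrict_restrict measurableSet_Icc,
      Set.inter_eq_left.2 (hsub n)]
    exact (hcontf.mono (hsub n)).integrableOn_Icc
  have hIlim' : Tendsto (fun n => ∫ x in Set.Icc (a n) (b n), f x ∂(volume.restrict (Set.Ioo A B)))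
      atTop (𝓝 (π / (α * β))) := by
    have heq : ∀ n, ∫ x in Set.Icc (a n) (b n), f x ∂(volume.restrict (Set.Ioo A B)) =
        ∫ x in Set.Icc (a n) (b n), f x := by
      intro n
      rw [Measure.restrict_restrict measurableSet_Icc, Set.inter_eq_left.2 (hsub n)]
    simp only [heq]
    exact hIlim
  have hint : Integrable f (volume.restrict (Set.Ioo A B)) :=
    hcover.integrable_of_integral_tendsto_of_nonneg_ae _ hfi hnonneg hIlim'
  have hval : ∫ x, f x ∂(volume.restrict (Set.Ioo A B)) = π / (α * β) :=
    hcover.integral_eq_of_tendsto _ hint hIlim'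
  refine ⟨hint, ?_⟩
  rw [hval, Real.sqrt_mul (by linarith : (0:ℝ) ≤ A - c)]


theorem stmt_9 (l ν : ℝ) (hl : 1 < l) (hν : ν ∈ Set.Ioo (1 / Real.sqrt l) 1) :
    ν * Real.sqrt (l - 1) *
        ∫ x in Set.Ioo (ν ^ 2) 1,
          1 / (x * (l * x - 1) * Real.sqrt ((x - ν ^ 2) * (1 - x))) =
      Real.pi * (-Real.sqrt (l - 1) + l * ν / Real.sqrt (l * ν ^ 2 - 1)) := by
  obtain ⟨hν1, hν2⟩ := hν
  have hl0 : 0 < l := by linarith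
  have hsl : 0 < Real.sqrt l := Real.sqrt_pos.2 hl0
  have hν0 : 0 < ν := lt_trans (by positivity) hν1
  have hA1 : ν ^ 2 < 1 := by nlinarith
  have hAl : 1 / l < ν ^ 2 := by
    have h := pow_lt_pow_left₀ hν1 (by positivity) (two_ne_zero)
    rwa [div_pow, one_pow, Real.sq_sqrt hl0.le] at h
  have hA0 : (0 : ℝ) < ν ^ 2 := by positivity
  have h1 := key_int (ν ^ 2) 1 0 hA0 hA1
  have h2 := key_int (ν ^ 2) 1 (1 / l) hAl hA1
  have hcongr : ∫ x in Set.Ioo (ν ^ 2) 1,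
      1 / (x * (l * x - 1) * Real.sqrt ((x - ν ^ 2) * (1 - x))) =
      ∫ x in Set.Ioo (ν ^ 2) 1,
        ((fun x => 1 / ((x - 1 / l) * Real.sqrt ((x - ν ^ 2) * (1 - x)))) x -
         (fun x => 1 / ((x - 0) * Real.sqrt ((x - ν ^ 2) * (1 - x)))) x) := by
    apply setIntegral_congr_fun measurableSet_Ioo
    intro x hx
    obtain ⟨hx1, hx2⟩ := hx
    have hx0 : 0 < x := lt_trans hA0 hx1
    have hlx : 0 < l * x - 1 := by
      have : 1 / l < x := lt_trans hAl hx1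
      rw [div_lt_iff₀ hl0] at this
      linarith
    have hS : 0 < Real.sqrt ((x - ν ^ 2) * (1 - x)) :=
      Real.sqrt_pos.2 (mul_pos (by linarith) (by linarith))
    have hxl : 0 < x - 1 / l := by
      have : 1 / l < x := lt_trans hAl hx1
      linarith
    simp only [sub_zero]
    set S := Real.sqrt ((x - ν ^ 2) * (1 - x)) with hSdef
    have hSne : S ≠ 0 := hS.ne'
    have hlxne : l * x - 1 ≠ 0 := hlx.ne'
    have hlxne' : x * l - 1 ≠ 0 := by rw [mul_comm]; exact hlxne
    field_simp
    ring
  rw [hcongr, integral_sub h2.1 h1.1, h2.2, h1.2]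
  have hs1 : Real.sqrt ((ν ^ 2 - 0) * (1 - 0)) = ν := by
    rw [sub_zero, sub_zero, mul_one, Real.sqrt_sq hν0.le]
  rw [hs1]
  set u := Real.sqrt (l * ν ^ 2 - 1) with hudef
  set w := Real.sqrt (l - 1) with hwdef
  have hlv : 0 < l * ν ^ 2 - 1 := by
    have := (div_lt_iff₀ hl0).1 hAl
    linarith [mul_comm l (ν ^ 2)]
  have hupos : 0 < u := Real.sqrt_pos.2 hlv
  have hwpos : 0 < w := Real.sqrt_pos.2 (by linarith)
  have hu2 : u ^ 2 = l * ν ^ 2 - 1 := Real.sq_sqrt hlv.le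
  have hw2 : w ^ 2 = l - 1 := Real.sq_sqrt (by linarith : (0:ℝ) ≤ l - 1)
  have hs2 : Real.sqrt ((ν ^ 2 - 1 / l) * (1 - 1 / l)) = u * w / l := by
    rw [show (ν ^ 2 - 1 / l) * (1 - 1 / l) = (u * w / l) ^ 2 by
      rw [div_pow, mul_pow, hu2, hw2]; field_simp]
    exact Real.sqrt_sq (by positivity)
  rw [hs2]
  field_simp
  ring
end
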